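/- Let α be a transcendental real number with 0 < α ≤ 1, and let h > 0 with exp(2π/h) rational. Let P_h be the set of primes not dividing the numerator or denominator of exp(2π/h) (in lowest terms). Then for any integers (k_p)_{p ∈ P_h} and (l_m)_{m ∈ ℕ₀}, all but finitely many zero and not all zero, one has exp(-ih(Σ_p k_p log p + Σ_m l_m log(m+α))) ≠ 1. -/

import Mathlib

lemma padicValRat_zpow' {t : ℕ} [Fact t.Prime] {x : ℚ} (hx : x ≠ 0) (n : ℤ) :
    padicValRat t (x ^ n) = n * padicValRat t x := by
  obtain ⟨m⟩|⟨m⟩ := n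
  · rw [Int.ofNat_eq_coe, zpow_natCast, padicValRat.pow x]
  · rw [zpow_negSucc, padicValRat.inv, padicValRat.pow x, Int.negSucc_eq]; push_cast; ring

lemma padicValRat_prod_zpow {t : ℕ} [Fact t.Prime] (s : Finset ℕ) (k : ℕ → ℤ)
    (hs : ∀ p ∈ s, Nat.Prime p) :
    padicValRat t (∏ p ∈ s, (p : ℚ) ^ (k p)) = ∑ p ∈ s, (k p) * padicValRat t (p : ℚ) := by
  classical
  induction s using Finset.induction_on with
  | empty => simp
  | @insert a s ha ih =>
    have ha' : Nat.Prime a := hs a (Finset.mem_insert_self a s)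
    have h1 : ((a : ℚ)) ≠ 0 := by exact_mod_cast ha'.ne_zero
    have h2 : (∏ p ∈ s, (p : ℚ) ^ (k p)) ≠ 0 := by
      rw [Finset.prod_ne_zero_iff]
      intro p hp
      have : ((p : ℚ)) ≠ 0 := by
        exact_mod_cast (hs p (Finset.mem_insert_of_mem hp)).ne_zero
      exact zpow_ne_zero _ this
    rw [Finset.prod_insert ha, Finset.sum_insert ha,
      padicValRat.mul (zpow_ne_zero _ h1) h2, padicValRat_zpow' h1,
      ih (fun p hp => hs p (Finset.mem_insert_of_mem hp))]

lemma padicValRat_prime_of_prime {t p : ℕ} [Fact t.Prime] (hp : Nat.Prime p) :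
    padicValRat t (p : ℚ) = if p = t then 1 else 0 := by
  split_ifs with h
  · subst h; exact padicValRat.self hp.one_lt
  · rw [padicValRat.of_nat]
    norm_cast
    exact padicValNat.eq_zero_of_not_dvd
      (fun hd => h ((Nat.prime_dvd_prime_iff_eq (Fact.out) hp).mp hd).symm)

theorem stmt_1 (α : ℝ) (hα : Transcendental ℚ α) (hα0 : 0 < α) (hα1 : α ≤ 1)
    (h : ℝ) (hh : 0 < h) (q : ℚ) (hq : Real.exp (2 * Real.pi / h) = (q : ℝ))
    (k l : ℕ → ℤ)
    (hkfin : (Function.support k).Finite) (hlfin : (Function.support l).Finite)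
    (hksupp : ∀ p, k p ≠ 0 → Nat.Prime p ∧ ¬ (p : ℤ) ∣ q.num * (q.den : ℤ))
    (hnontriv : (∃ p, k p ≠ 0) ∨ (∃ m, l m ≠ 0)) :
    Complex.exp (-Complex.I * h *
      ((∑ᶠ p : ℕ, (k p : ℝ) * Real.log p) + ∑ᶠ m : ℕ, (l m : ℝ) * Real.log (m + α))) ≠ 1 := by
  classical
  intro H
  set S : ℝ := (∑ᶠ p : ℕ, (k p : ℝ) * Real.log p) + ∑ᶠ m : ℕ, (l m : ℝ) * Real.log (m + α)
    with hSdef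
  rw [show (-Complex.I * (h:ℂ) * ((((∑ᶠ p : ℕ, (k p : ℝ) * Real.log p) : ℝ) : ℂ) +
      (((∑ᶠ m : ℕ, (l m : ℝ) * Real.log (m + α)) : ℝ) : ℂ))) =
      -Complex.I * (h:ℂ) * ((S : ℝ) : ℂ) by push_cast [hSdef]; ring] at H
  rw [Complex.exp_eq_one_iff] at H
  obtain ⟨n, hn⟩ := H
  have him : -(h * S) = (n : ℝ) * (2 * Real.pi) := by
    have := congrArg Complex.im hn
    simpa [Complex.mul_im, Complex.mul_re] using this
  -- basic positivity facts
  have hq0R : (0:ℝ) < (q:ℝ) := by rw [← hq]; exact Real.exp_pos _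
  have hq1R : (1:ℝ) < (q:ℝ) := by
    rw [← hq, Real.one_lt_exp_iff]
    positivity
  have hq1 : (1:ℚ) < q := by exact_mod_cast hq1R
  have hq0 : q ≠ 0 := by positivity
  have hlogq : Real.log (q:ℝ) = 2 * Real.pi / h := by rw [← hq, Real.log_exp]
  have h2pi : 2 * Real.pi = h * Real.log (q:ℝ) := by rw [hlogq]; field_simp
  have hS : S = ((-n : ℤ) : ℝ) * Real.log (q:ℝ) := by
    apply mul_left_cancel₀ (ne_of_gt hh)
    push_cast
    linear_combination -him - (n:ℝ) * h2pi
  -- finite sums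
  set sk := hkfin.toFinset with hskdef
  set sl := hlfin.toFinset with hsldef
  have hmemk : ∀ p, p ∈ sk ↔ k p ≠ 0 := by intro p; simp [hskdef]
  have hmeml : ∀ m, m ∈ sl ↔ l m ≠ 0 := by intro m; simp [hsldef]
  have hprime : ∀ p ∈ sk, Nat.Prime p := fun p hp => (hksupp p ((hmemk p).mp hp)).1
  have hppos : ∀ p ∈ sk, (0:ℝ) < (p:ℝ) := by
    intro p hp
    exact_mod_cast (hprime p hp).pos
  have hmpos : ∀ m : ℕ, (0:ℝ) < (m:ℝ) + α := fun m => by positivity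
  have hs1 : (∑ᶠ p : ℕ, (k p : ℝ) * Real.log p) = ∑ p ∈ sk, (k p : ℝ) * Real.log p := by
    apply finsum_eq_finset_sum_of_support_subset
    intro p hp
    rw [Function.mem_support] at hp
    refine Finset.mem_coe.mpr ((hmemk p).mpr fun h0 => hp ?_)
    rw [h0]; simp
  have hs2 : (∑ᶠ m : ℕ, (l m : ℝ) * Real.log (m + α)) =
      ∑ m ∈ sl, (l m : ℝ) * Real.log (m + α) := by
    apply finsum_eq_finset_sum_of_support_subset
    intro m hm
    rw [Function.mem_support] at hm
    refine Finset.mem_coe.mpr ((hmeml m).mpr fun h0 => hm ?_)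
    rw [h0]; simp
  -- the key product identity over ℝ
  have hPkpos : (0:ℝ) < ∏ p ∈ sk, (p:ℝ) ^ (k p) :=
    Finset.prod_pos fun p hp => zpow_pos (hppos p hp) _
  have hPlpos : (0:ℝ) < ∏ m ∈ sl, ((m:ℝ) + α) ^ (l m) :=
    Finset.prod_pos fun m _ => zpow_pos (hmpos m) _
  have hlogR : Real.log ((∏ p ∈ sk, (p:ℝ) ^ (k p)) * ∏ m ∈ sl, ((m:ℝ) + α) ^ (l m)) = S := by
    rw [Real.log_mul (ne_of_gt hPkpos) (ne_of_gt hPlpos),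
      Real.log_prod (fun p hp => ne_of_gt (zpow_pos (hppos p hp) _)),
      Real.log_prod (fun m _ => ne_of_gt (zpow_pos (hmpos m) _))]
    simp_rw [Real.log_zpow]
    rw [hSdef, hs1, hs2]
  have E : (∏ p ∈ sk, (p:ℝ) ^ (k p)) * (∏ m ∈ sl, ((m:ℝ) + α) ^ (l m)) = (q:ℝ) ^ (-n : ℤ) := by
    have h1 : Real.log ((∏ p ∈ sk, (p:ℝ) ^ (k p)) * ∏ m ∈ sl, ((m:ℝ) + α) ^ (l m)) =
        Real.log ((q:ℝ) ^ (-n : ℤ)) := by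
      rw [hlogR, Real.log_zpow, hS]
    have := congrArg Real.exp h1
    rwa [Real.exp_log (mul_pos hPkpos hPlpos), Real.exp_log (zpow_pos hq0R _)] at this
  by_cases hl : ∃ m, l m ≠ 0
  · -- Case A : some l m ≠ 0, contradict transcendence
    obtain ⟨m₀, hm₀⟩ := hl
    have hm₀s : m₀ ∈ sl := (hmeml m₀).mpr hm₀
    set Pk : ℚ := ∏ p ∈ sk, (p:ℚ) ^ (k p) with hPkdef
    have hPkR : ((Pk : ℚ) : ℝ) = ∏ p ∈ sk, (p:ℝ) ^ (k p) := by
      rw [hPkdef]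
      push_cast
      rfl
    have hPk0 : Pk ≠ 0 := by
      have : (0:ℝ) < ((Pk : ℚ) : ℝ) := hPkR ▸ hPkpos
      intro h0
      rw [h0] at this
      simp at this
    set r : ℚ := q ^ (-n : ℤ) / Pk with hrdef
    have hr0 : r ≠ 0 := div_ne_zero (zpow_ne_zero _ hq0) hPk0
    have hrR : ((r : ℚ) : ℝ) = (q:ℝ) ^ (-n:ℤ) / ∏ p ∈ sk, (p:ℝ) ^ (k p) := by
      rw [hrdef]
      push_cast [hPkR]
      rfl
    have hrr : ∏ m ∈ sl, ((m:ℝ) + α) ^ (l m) = ((r:ℚ) : ℝ) := by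
      rw [hrR, eq_div_iff (ne_of_gt hPkpos), mul_comm]
      exact E
    set a : ℕ → ℕ := fun m => (l m).toNat with hadef
    set b : ℕ → ℕ := fun m => (-(l m)).toNat with hbdef
    have hsplit : ∀ m : ℕ, ((m:ℝ) + α) ^ (l m) = ((m:ℝ) + α) ^ (a m) / ((m:ℝ) + α) ^ (b m) := by
      intro m
      rcases le_or_gt 0 (l m) with hm | hm
      · have h1 : l m = (a m : ℤ) := (Int.toNat_of_nonneg hm).symm
        have h2 : b m = 0 := by
          rw [hbdef]
          simpa using Int.toNat_of_nonpos (show -(l m) ≤ 0 by omega)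
        rw [h2, pow_zero, div_one, h1, zpow_natCast]
      · have h1 : a m = 0 := by
          rw [hadef]
          simpa using Int.toNat_of_nonpos (show l m ≤ 0 by omega)
        have h2 : l m = -(b m : ℤ) := by
          rw [hbdef]
          simp [Int.toNat_of_nonneg (by omega : (0:ℤ) ≤ -(l m))]
        rw [h1, pow_zero, h2, zpow_neg, zpow_natCast, one_div]
    have hbprod0 : (∏ m ∈ sl, ((m:ℝ) + α) ^ (b m)) ≠ 0 := by
      refine Finset.prod_ne_zero_iff.mpr fun m _ => pow_ne_zero _ (ne_of_gt (hmpos m))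
    have key : ∏ m ∈ sl, ((m:ℝ) + α) ^ (a m) =
        ((r:ℚ) : ℝ) * ∏ m ∈ sl, ((m:ℝ) + α) ^ (b m) := by
      have h1 : ∏ m ∈ sl, ((m:ℝ) + α) ^ (l m) =
          (∏ m ∈ sl, ((m:ℝ) + α) ^ (a m)) / ∏ m ∈ sl, ((m:ℝ) + α) ^ (b m) := by
        rw [← Finset.prod_div_distrib]
        exact Finset.prod_congr rfl fun m _ => hsplit m
      rw [h1, div_eq_iff hbprod0] at hrr
      rw [hrr]
    -- build the polynomial
    set P : Polynomial ℚ :=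
      (∏ m ∈ sl, (Polynomial.X + Polynomial.C (m:ℚ)) ^ (a m)) -
        Polynomial.C r * ∏ m ∈ sl, (Polynomial.X + Polynomial.C (m:ℚ)) ^ (b m) with hPdef
    have hPα : Polynomial.aeval α P = 0 := by
      rw [hPdef]
      simp only [map_sub, map_mul, map_prod, map_pow, map_add, Polynomial.aeval_X,
        Polynomial.aeval_C]
      have hcast : ∀ m : ℕ, (algebraMap ℚ ℝ) ((m:ℚ)) = (m:ℝ) := by intro m; push_cast; simp
      have hrcast : (algebraMap ℚ ℝ) r = ((r:ℚ):ℝ) := by simp [eq_ratCast]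
      simp_rw [hcast, hrcast]
      have hcomm : ∀ m : ℕ, α + (m:ℝ) = (m:ℝ) + α := fun m => add_comm _ _
      simp_rw [hcomm]
      rw [key]
      ring
    have hP0 : P ≠ 0 := by
      intro h0
      have heval := congrArg (Polynomial.eval (-(m₀:ℚ))) h0
      rw [hPdef] at heval
      simp only [Polynomial.eval_sub, Polynomial.eval_mul, Polynomial.eval_prod,
        Polynomial.eval_pow, Polynomial.eval_add, Polynomial.eval_X, Polynomial.eval_C,
        Polynomial.eval_zero] at heval
      have hfac : ∀ m ∈ sl, m ≠ m₀ → (-(m₀:ℚ) + (m:ℚ)) ≠ 0 := by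
        intro m _ hne h0'
        have : (m:ℚ) = (m₀:ℚ) := by linarith
        exact hne (by exact_mod_cast this)
      rcases lt_or_gt_of_ne hm₀ with hneg | hpos
      · -- l m₀ < 0 : a m₀ = 0, b m₀ > 0
        have hb0 : b m₀ ≠ 0 := by simp [hbdef]; omega
        have ha0 : a m₀ = 0 := by simp [hadef]; omega
        have h2 : (∏ m ∈ sl, (-(m₀:ℚ) + (m:ℚ)) ^ (b m)) = 0 :=
          Finset.prod_eq_zero hm₀s (by rw [show -(m₀:ℚ) + (m₀:ℚ) = 0 by ring, zero_pow hb0])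
        have h3 : (∏ m ∈ sl, (-(m₀:ℚ) + (m:ℚ)) ^ (a m)) ≠ 0 := by
          refine Finset.prod_ne_zero_iff.mpr fun m hm => ?_
          by_cases hmm : m = m₀
          · subst hmm; rw [ha0, pow_zero]; exact one_ne_zero
          · exact pow_ne_zero _ (hfac m hm hmm)
        rw [h2, mul_zero, sub_zero] at heval
        exact h3 heval
      · -- l m₀ > 0 : a m₀ > 0, b m₀ = 0
        have ha0 : a m₀ ≠ 0 := by simp [hadef]; omega
        have hb0 : b m₀ = 0 := by simp [hbdef]; omega
        have h2 : (∏ m ∈ sl, (-(m₀:ℚ) + (m:ℚ)) ^ (a m)) = 0 :=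
          Finset.prod_eq_zero hm₀s (by rw [show -(m₀:ℚ) + (m₀:ℚ) = 0 by ring, zero_pow ha0])
        have h3 : (∏ m ∈ sl, (-(m₀:ℚ) + (m:ℚ)) ^ (b m)) ≠ 0 := by
          refine Finset.prod_ne_zero_iff.mpr fun m hm => ?_
          by_cases hmm : m = m₀
          · subst hmm; rw [hb0, pow_zero]; exact one_ne_zero
          · exact pow_ne_zero _ (hfac m hm hmm)
        rw [h2, zero_sub, neg_eq_zero] at heval
        exact h3 (by
          rcases mul_eq_zero.mp heval with h' | h'
          · exact absurd h' hr0
          · exact h')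
    exact hα ⟨P, hP0, hPα⟩
  · -- Case B : all l m = 0
    obtain ⟨p₀, hk0⟩ := hnontriv.resolve_right hl
    have hp₀s : p₀ ∈ sk := (hmemk p₀).mpr hk0
    have hl0 : ∀ m, l m = 0 := by
      intro m
      by_contra h0
      exact hl ⟨m, h0⟩
    have E2 : (∏ p ∈ sk, (p:ℝ) ^ (k p)) = (q:ℝ) ^ (-n : ℤ) := by
      have h1 : (∏ m ∈ sl, ((m:ℝ) + α) ^ (l m)) = 1 :=
        Finset.prod_eq_one fun m _ => by rw [hl0 m, zpow_zero]
      rwa [h1, mul_one] at E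
    have EQ : (∏ p ∈ sk, (p:ℚ) ^ (k p)) = q ^ (-n : ℤ) := by
      have hc : (((∏ p ∈ sk, (p:ℚ) ^ (k p)) : ℚ) : ℝ) = ((q ^ (-n : ℤ) : ℚ) : ℝ) := by
        push_cast
        rw [E2]
      exact_mod_cast hc
    by_cases hn0 : (-n : ℤ) = 0
    · haveI : Fact (Nat.Prime p₀) := Fact.mk (hprime p₀ hp₀s)
      have val := congrArg (padicValRat p₀) EQ
      rw [padicValRat_prod_zpow sk k hprime, hn0, zpow_zero, padicValRat.one] at val
      rw [Finset.sum_eq_single_of_mem p₀ hp₀s (fun p hp hne => by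
        rw [padicValRat_prime_of_prime (hprime p hp), if_neg hne, mul_zero])] at val
      rw [padicValRat_prime_of_prime (hprime p₀ hp₀s), if_pos rfl, mul_one] at val
      exact hk0 val
    · have hdenlt : (q.den : ℤ) < q.num := by
        have hq' := hq1
        rw [← Rat.num_div_den q] at hq'
        have hden0 : (0:ℚ) < (q.den : ℚ) := by positivity
        have h1 := (one_lt_div hden0).mp hq'
        exact_mod_cast h1
      have hnum2 : 2 ≤ q.num := by
        have h1 : (1:ℤ) ≤ (q.den : ℤ) := by exact_mod_cast q.pos
        omega
      have hnatAbs : q.num.natAbs ≠ 1 := by omega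
      obtain ⟨t, htp, htd⟩ := Nat.exists_prime_and_dvd hnatAbs
      haveI : Fact (Nat.Prime t) := Fact.mk htp
      have htd' : (t:ℤ) ∣ q.num := Int.dvd_natAbs.mp (Int.natCast_dvd_natCast.mpr htd)
      have htnk : t ∉ sk := by
        intro hmem
        exact (hksupp t ((hmemk t).mp hmem)).2 (htd'.mul_right _)
      have val := congrArg (padicValRat t) EQ
      rw [padicValRat_prod_zpow sk k hprime, padicValRat_zpow' hq0] at val
      rw [Finset.sum_eq_zero (fun p hp => by
        rw [padicValRat_prime_of_prime (hprime p hp),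
          if_neg (fun he => htnk (by rwa [he] at hp)), mul_zero])] at val
      -- now  0 = (-n) * padicValRat t q, with padicValRat t q ≥ 1
      have hvden : padicValNat t q.den = 0 := by
        apply padicValNat.eq_zero_of_not_dvd
        intro hdvd
        have h1 : t ∣ Nat.gcd q.num.natAbs q.den := Nat.dvd_gcd htd hdvd
        rw [q.reduced] at h1
        exact htp.one_lt.ne' (Nat.dvd_one.mp h1)
      have hvnum : 1 ≤ padicValInt t q.num := by
        unfold padicValInt
        exact one_le_padicValNat_of_dvd (Int.natAbs_ne_zero.mpr (by omega)) htd
      have hvq : 1 ≤ padicValRat t q := by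
        unfold padicValRat
        rw [hvden]
        omega
      have hne : (-n : ℤ) * padicValRat t q ≠ 0 :=
        mul_ne_zero hn0 (by omega)
      exact hne val.symm
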